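/- arXiv:1301.1819 — 2 statements merged into one kernel-verified Lean document; each statement's English description precedes it below -/
import Mathlib

section
/- Let σ, μ, δ, δ̄ be as in the homogeneous (δ,σ)-IFS setting with supp(μ) ⊆ [0,1]. If x ∈ ℝ and ε ≥ 0 satisfy [x - δ - ε, x + ε] ∩ (δ̄ · supp(σ)) = ∅, then μ(B_ε(x)) = 0; in particular (for ε = 0) x ∉ supp(μ). -/
open MeasureTheory Metric Set

/-- The topological support of a Borel measure on ℝ. -/
def msupport (ν : MeasureTheory.Measure ℝ) : Set ℝ :=
  {x | ∀ ε > 0, 0 < ν (Metric.ball x ε)}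

lemma msupport_compl_null (ν : MeasureTheory.Measure ℝ) : ν (msupport ν)ᶜ = 0 := by
  apply measure_null_of_locally_null
  intro x hx
  simp only [msupport, mem_compl_iff, mem_setOf_eq, not_forall] at hx
  obtain ⟨ε, hε, hν⟩ := hx
  refine ⟨Metric.ball x ε, ?_, ?_⟩
  · exact Filter.mem_of_superset (nhdsWithin_le_nhds (Metric.ball_mem_nhds x hε)) subset_rfl
  · exact le_antisymm (not_lt.1 hν) (by positivity)

lemma msupport_isClosed (ν : MeasureTheory.Measure ℝ) : IsClosed (msupport ν) := by
  rw [← isOpen_compl_iff, Metric.isOpen_iff]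
  intro x hx
  simp only [msupport, mem_compl_iff, mem_setOf_eq, not_forall] at hx
  obtain ⟨ε, hε, hν⟩ := hx
  refine ⟨ε / 2, by linarith, fun y hy => ?_⟩
  simp only [msupport, mem_compl_iff, mem_setOf_eq, not_forall]
  refine ⟨ε / 2, by linarith, ?_⟩
  have hsub : Metric.ball y (ε / 2) ⊆ Metric.ball x ε := by
    intro z hz
    have := Metric.mem_ball.1 hz
    have := Metric.mem_ball.1 hy
    rw [Metric.mem_ball]
    calc dist z x ≤ dist z y + dist y x := dist_triangle _ _ _
      _ < ε / 2 + ε / 2 := by gcongr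
      _ = ε := by ring
  intro h
  exact hν (h.trans_le (measure_mono hsub))

lemma gap_ball_null (σ μ : Measure ℝ)
    [IsProbabilityMeasure σ] [IsProbabilityMeasure μ]
    (δ : ℝ) (hδ0 : 0 < δ) (hδ1 : δ < 1)
    (hμ : msupport μ ⊆ Set.Icc (0:ℝ) 1)
    (hinv : ∀ f : BoundedContinuousFunction ℝ ℝ,
      ∫ x, f x ∂μ = ∫ β, ∫ s, f (δ * s + (1 - δ) * β) ∂μ ∂σ)
    (x ε : ℝ)
    (hdisj : Set.Icc (x - δ - ε) (x + ε) ∩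
        ((fun β => (1 - δ) * β) '' msupport σ) = ∅) :
    μ (Metric.ball x ε) = 0 := by
  -- bump function
  set g : ℝ → ℝ := fun y => max (ε - |y - x|) 0 with hg
  have hgc : Continuous g := by fun_prop
  have hgnn : ∀ y, 0 ≤ g y := fun y => le_max_right _ _
  have hgle : ∀ y, g y ≤ ε ⊔ 0 := by
    intro y
    apply max_le_max _ le_rfl
    have : 0 ≤ |y - x| := abs_nonneg _
    linarith
  set G : BoundedContinuousFunction ℝ ℝ :=
    BoundedContinuousFunction.mkOfBound ⟨g, hgc⟩ (ε ⊔ 0) (by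
      intro a b
      rw [Real.dist_eq]
      have h1 := hgnn a; have h2 := hgnn b
      have h3 := hgle a; have h4 := hgle b
      simp only [ContinuousMap.coe_mk]
      rw [abs_le]; constructor <;> linarith) with hG
  have hGg : ∀ y, G y = g y := fun y => rfl
  -- g vanishes at δ s + (1-δ) β for s ∈ [0,1], β ∈ msupport σ
  have hvanish : ∀ s ∈ Set.Icc (0:ℝ) 1, ∀ β ∈ msupport σ,
      g (δ * s + (1 - δ) * β) = 0 := by
    intro s hs β hβ
    have hβ' : (1 - δ) * β ∉ Set.Icc (x - δ - ε) (x + ε) := by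
      intro hmem
      have : (1 - δ) * β ∈ Set.Icc (x - δ - ε) (x + ε) ∩
          ((fun β => (1 - δ) * β) '' msupport σ) := ⟨hmem, ⟨β, hβ, rfl⟩⟩
      rw [hdisj] at this
      exact this
    have hs0 := hs.1; have hs1 := hs.2
    rw [Set.mem_Icc, not_and_or, not_le, not_le] at hβ'
    have : ε ≤ |δ * s + (1 - δ) * β - x| := by
      rcases hβ' with h | h
      · rw [abs_sub_comm, le_abs]
        left
        nlinarith
      · rw [le_abs]
        left
        nlinarith
    simp only [hg]
    rw [max_eq_right]
    linarith
  -- the invariance identity gives ∫ g dμ = 0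
  have hμcompl := msupport_compl_null μ
  have hinner : ∀ β ∈ msupport σ, ∫ s, G (δ * s + (1 - δ) * β) ∂μ = 0 := by
    intro β hβ
    apply integral_eq_zero_of_ae
    filter_upwards [(ae_iff.2 (by exact hμcompl) :
      ∀ᵐ s ∂μ, s ∈ msupport μ)] with s hs
    rw [hGg]
    exact hvanish s (hμ hs) β hβ
  have houter : ∫ β, ∫ s, G (δ * s + (1 - δ) * β) ∂μ ∂σ = 0 := by
    apply integral_eq_zero_of_ae
    filter_upwards [(ae_iff.2 (by exact msupport_compl_null σ) :
      ∀ᵐ β ∂σ, β ∈ msupport σ)] with β hβ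
    exact hinner β hβ
  have hint : ∫ y, G y ∂μ = 0 := (hinv G).trans houter
  -- conclude
  have hGint : Integrable (fun y => G y) μ := G.integrable μ
  have hae : (fun y => G y) =ᵐ[μ] 0 := by
    exact (integral_eq_zero_iff_of_nonneg (fun y => hgnn y) hGint).mp hint
  have hnull : μ {y | G y ≠ 0} = 0 := by
    have := hae
    rw [Filter.EventuallyEq, ae_iff] at this
    simpa using this
  apply measure_mono_null _ hnull
  intro y hy
  rw [Metric.mem_ball, Real.dist_eq] at hy
  simp only [mem_setOf_eq, hGg, hg]
  intro hcontra
  rw [max_eq_left (by linarith)] at hcontra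
  linarith

theorem gap_criterion (σ μ : Measure ℝ)
    [IsProbabilityMeasure σ] [IsProbabilityMeasure μ]
    (δ : ℝ) (hδ0 : 0 < δ) (hδ1 : δ < 1)
    (hσ : msupport σ ⊆ Set.Icc (0:ℝ) 1) (hμ : msupport μ ⊆ Set.Icc (0:ℝ) 1)
    (hinv : ∀ f : BoundedContinuousFunction ℝ ℝ,
      ∫ x, f x ∂μ = ∫ β, ∫ s, f (δ * s + (1 - δ) * β) ∂μ ∂σ)
    (x ε : ℝ) (hε : 0 ≤ ε)
    (hdisj : Set.Icc (x - δ - ε) (x + ε) ∩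
        ((fun β => (1 - δ) * β) '' msupport σ) = ∅) :
    μ (Metric.ball x ε) = 0 ∧ x ∉ msupport μ := by
  have h1 : μ (Metric.ball x ε) = 0 :=
    gap_ball_null σ μ δ hδ0 hδ1 hμ hinv x ε hdisj
  refine ⟨h1, ?_⟩
  -- find a positive ε' with the disjointness property
  obtain ⟨ε', hε', hdisj'⟩ : ∃ ε' > 0, Set.Icc (x - δ - ε') (x + ε') ∩
      ((fun β => (1 - δ) * β) '' msupport σ) = ∅ := by
    rcases lt_or_eq_of_le hε with h | h
    · exact ⟨ε, h, hdisj⟩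
    · -- ε = 0 : use compactness to fatten the gap
      subst h
      have hC : IsClosed ((fun β => (1 - δ) * β) '' msupport σ) := by
        have h1δ : (1 - δ) ≠ 0 := by linarith
        have := (Homeomorph.mulLeft₀ (1 - δ) h1δ).isClosedMap _ (msupport_isClosed σ)
        exact this
      have hK : IsCompact (Set.Icc (x - δ - 0) (x + 0)) := isCompact_Icc
      have hd : Disjoint (Set.Icc (x - δ - 0) (x + 0))
          ((fun β => (1 - δ) * β) '' msupport σ) :=
        Set.disjoint_iff_inter_eq_empty.2 hdisj
      obtain ⟨r, hr, hthick⟩ := hd.exists_thickenings hK hC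
      refine ⟨r / 2, by linarith, ?_⟩
      rw [Set.eq_empty_iff_forall_notMem]
      rintro y ⟨hy1, hy2⟩
      have hy3 : y ∈ Metric.thickening r (Set.Icc (x - δ - 0) (x + 0)) := by
        rw [Metric.mem_thickening_iff]
        simp only [sub_zero, add_zero, Set.mem_Icc] at hy1 ⊢
        rcases lt_or_ge y (x - δ) with hya | hya
        · refine ⟨x - δ, ⟨le_refl _, by linarith⟩, ?_⟩
          rw [Real.dist_eq, abs_sub_lt_iff]
          constructor <;> linarith [hy1.1]
        · rcases le_or_gt y x with hyb | hyb
          · exact ⟨y, ⟨hya, hyb⟩, by rw [dist_self]; linarith⟩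
          · refine ⟨x, ⟨by linarith, le_refl _⟩, ?_⟩
            rw [Real.dist_eq, abs_sub_lt_iff]
            constructor <;> linarith [hy1.2]
      have hy4 : y ∈ Metric.thickening r ((fun β => (1 - δ) * β) '' msupport σ) :=
        Metric.self_subset_thickening hr _ hy2
      exact (Set.disjoint_left.1 hthick) hy3 hy4
  intro hx
  have := hx ε' hε'
  rw [gap_ball_null σ μ δ hδ0 hδ1 hμ hinv x ε' hdisj'] at this
  exact lt_irrefl 0 this
end

section
/- Let σ be the invariant measure of a two-map disconnected affine IFS on [0,1] with 0 and 1 as fixed points and both contraction ratios in (0, 1/3], and let μ be the invariant measure of the homogeneous (δ,σ)-IFS for some 0 < δ < 1. Assume (Cabrelli–Hare–Molter) that a sum of n+1 copies (suitably rescaled, each a two-map Cantor set with minimal ratio a ≤ 1/3) contains an interval whenever (n)a²/(1-a)³ + a/(1-a) ≥ 1. Then supp(μ) contains a nondegenerate closed interval; moreover one can take the interval [0, (1-δ)δⁿ] for some n depending only on a (not on δ). -/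
open MeasureTheory Metric Set

section Aux

open Finset Filter

lemma msupport_closed (ν : Measure ℝ) : IsClosed (msupport ν) := by
  rw [← isOpen_compl_iff, Metric.isOpen_iff]
  intro x hx
  simp only [msupport, mem_compl_iff, mem_setOf_eq, not_forall] at hx
  obtain ⟨ε, hε, hball⟩ := hx
  refine ⟨ε/2, by linarith, fun y hy => ?_⟩
  simp only [msupport, mem_compl_iff, mem_setOf_eq, not_forall]
  refine ⟨ε/2, by linarith, ?_⟩
  have hsub : ball y (ε/2) ⊆ ball x ε := by
    intro u hu
    have := mem_ball.mp hu
    have h2 := mem_ball.mp hy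
    exact mem_ball.mpr (by calc dist u x ≤ dist u y + dist y x := dist_triangle _ _ _
                              _ < ε := by linarith)
  intro hpos
  exact hball (lt_of_lt_of_le hpos (measure_mono hsub))

lemma msupport_nonempty (ν : Measure ℝ) [IsProbabilityMeasure ν] : ∃ w, w ∈ msupport ν := by
  by_contra h
  push_neg at h
  simp only [msupport, mem_setOf_eq, not_forall] at h
  choose ε hε hν using h
  have hν' : ∀ x, ν (ball x (ε x)) = 0 := by
    intro x
    exact le_antisymm (not_lt.mp (hν x)) zero_le
  have hcover : ⋃ x, ball x (ε x) = Set.univ := by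
    apply Set.eq_univ_of_forall
    intro x
    exact mem_iUnion.mpr ⟨x, mem_ball_self (hε x)⟩
  obtain ⟨T, hTc, hT⟩ := TopologicalSpace.isOpen_iUnion_countable
    (fun x : ℝ => ball x (ε x)) (fun x => isOpen_ball)
  have h0 : ν univ = 0 := by
    rw [← hcover, ← hT]
    exact (measure_biUnion_null_iff hTc).mpr (fun x _ => hν' x)
  simp [measure_univ] at h0

lemma support_step (σ μ : Measure ℝ) [IsProbabilityMeasure σ] [IsProbabilityMeasure μ]
    (δ : ℝ) (hδ0 : 0 < δ) (hδ1 : δ < 1)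
    (hinv : ∀ f : BoundedContinuousFunction ℝ ℝ,
      ∫ x, f x ∂μ = ∫ β, ∫ s, f (δ * s + (1 - δ) * β) ∂μ ∂σ)
    {b w : ℝ} (hb : b ∈ msupport σ) (hw : w ∈ msupport μ) :
    δ * w + (1 - δ) * b ∈ msupport μ := by
  intro ε hε
  by_contra hcon
  set t := δ * w + (1 - δ) * b with ht
  have hμ0 : μ (ball t ε) = 0 := le_antisymm (not_lt.mp hcon) zero_le
  have hcont : Continuous (fun u : ℝ => max 0 (1 - ε⁻¹ * dist u t)) :=
    continuous_const.max (by fun_prop)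
  have hbd : ∀ u : ℝ, ‖max (0:ℝ) (1 - ε⁻¹ * dist u t)‖ ≤ 1 := by
    intro u
    have h2 : max (0:ℝ) (1 - ε⁻¹ * dist u t) ≤ 1 := by
      apply max_le (by norm_num)
      have : 0 ≤ ε⁻¹ * dist u t := by positivity
      linarith
    rw [Real.norm_eq_abs, abs_le]
    exact ⟨by linarith [le_max_left (0:ℝ) (1 - ε⁻¹ * dist u t)], h2⟩
  set f : BoundedContinuousFunction ℝ ℝ :=
    BoundedContinuousFunction.ofNormedAddCommGroup _ hcont 1 hbd with hf
  have hfval : ∀ u : ℝ, f u = max 0 (1 - ε⁻¹ * dist u t) := fun u => rfl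
  have hf0 : ∀ u : ℝ, 0 ≤ f u := fun u => le_max_left _ _
  have hf1 : ∀ u : ℝ, ‖f u‖ ≤ 1 := fun u => hbd u
  have hfhalf : ∀ u : ℝ, dist u t ≤ ε/2 → 1/2 ≤ f u := by
    intro u hu
    rw [hfval]
    have h3 : ε⁻¹ * dist u t ≤ ε⁻¹ * (ε/2) :=
      mul_le_mul_of_nonneg_left hu (by positivity)
    have h2 : ε⁻¹ * (ε/2) = 1/2 := by field_simp
    refine le_trans ?_ (le_max_right _ _)
    linarith [h3, h2.le]
  have hLHS : ∫ x, f x ∂μ = 0 := by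
    apply integral_eq_zero_of_ae
    rw [Filter.EventuallyEq, ae_iff]
    refine measure_mono_null (fun u hu => ?_) hμ0
    simp only [mem_setOf_eq] at hu
    by_contra hmem
    apply hu
    have hd : ε ≤ dist u t := by
      by_contra hlt
      exact hmem (mem_ball.mpr (by rwa [not_le] at hlt))
    have h1 : (1:ℝ) ≤ ε⁻¹ * dist u t := by
      calc (1:ℝ) = ε⁻¹ * ε := by field_simp
        _ ≤ ε⁻¹ * dist u t := mul_le_mul_of_nonneg_left hd (by positivity)
    simp only [Pi.zero_apply]
    rw [hfval]
    exact max_eq_left (by linarith)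
  set g : ℝ → ℝ := fun β => ∫ s', f (δ * s' + (1 - δ) * β) ∂μ with hg
  have hgmeas : StronglyMeasurable g := by
    have hF : Continuous (fun p : ℝ × ℝ => f (δ * p.2 + (1 - δ) * p.1)) :=
      f.continuous.comp (by fun_prop)
    exact hF.stronglyMeasurable.integral_prod_right'
  have hgbd : ∀ β, ‖g β‖ ≤ 1 := by
    intro β
    have h := norm_integral_le_of_norm_le_const (μ := μ)
      (f := fun s' => f (δ * s' + (1 - δ) * β)) (C := 1)
      (Filter.Eventually.of_forall (fun s' => hf1 _))
    simpa [measure_univ] using h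
  have hgint : Integrable g σ :=
    Integrable.mono' (integrable_const 1) hgmeas.aestronglyMeasurable
      (Filter.Eventually.of_forall hgbd)
  have hg0 : ∀ β, 0 ≤ g β := fun β => integral_nonneg (fun s' => hf0 _)
  set c₁ : ℝ := (μ (ball w (ε/2))).toReal * (1/2) with hc₁
  have hμball : 0 < (μ (ball w (ε/2))).toReal :=
    ENNReal.toReal_pos (hw (ε/2) (by linarith)).ne' (measure_ne_top μ _)
  have hc₁pos : 0 < c₁ := by positivity
  have hglow : ∀ β ∈ ball b (ε/2), c₁ ≤ g β := by
    intro β hβ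
    have hint1 : Integrable (fun s' => f (δ * s' + (1 - δ) * β)) μ :=
      Integrable.mono' (integrable_const 1)
        (f.continuous.comp
          (by fun_prop : Continuous fun s' : ℝ => δ * s' + (1 - δ) * β)).aestronglyMeasurable
        (Filter.Eventually.of_forall (fun s' => hf1 _))
    have hint2 : Integrable ((ball w (ε/2)).indicator (fun _ => (1:ℝ)/2)) μ :=
      (integrable_const _).indicator measurableSet_ball
    have hpt : ∀ s', (ball w (ε/2)).indicator (fun _ => (1:ℝ)/2) s'
        ≤ f (δ * s' + (1 - δ) * β) := by
      intro s'
      by_cases hmem : s' ∈ ball w (ε/2)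
      · rw [Set.indicator_of_mem hmem]
        apply hfhalf
        have h1 : |s' - w| < ε/2 := by simpa [Real.dist_eq] using hmem
        have h2 : |β - b| < ε/2 := by simpa [Real.dist_eq] using hβ
        have hrw : δ * s' + (1 - δ) * β - t = δ * (s' - w) + (1 - δ) * (β - b) := by
          rw [ht]; ring
        rw [Real.dist_eq, hrw]
        calc |δ * (s' - w) + (1 - δ) * (β - b)| ≤ |δ * (s' - w)| + |(1 - δ) * (β - b)| :=
              abs_add_le _ _
          _ = δ * |s' - w| + (1 - δ) * |β - b| := by
              rw [abs_mul, abs_mul, abs_of_pos hδ0, abs_of_pos (by linarith : (0:ℝ) < 1 - δ)]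
          _ ≤ ε/2 := by nlinarith
      · rw [Set.indicator_of_notMem hmem]; exact hf0 _
    have hmono := integral_mono hint2 hint1 hpt
    rw [integral_indicator_const _ measurableSet_ball] at hmono
    rw [hc₁]
    calc (μ (ball w (ε/2))).toReal * (1/2)
        = (μ (ball w (ε/2))).toReal • ((1:ℝ)/2) := by rw [smul_eq_mul]
      _ ≤ g β := hmono
  have houter : ∫ β, (ball b (ε/2)).indicator (fun _ => c₁) β ∂σ ≤ ∫ β, g β ∂σ := by
    apply integral_mono ((integrable_const _).indicator measurableSet_ball) hgint
    intro β
    by_cases hmem : β ∈ ball b (ε/2)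
    · rw [Set.indicator_of_mem hmem]; exact hglow β hmem
    · rw [Set.indicator_of_notMem hmem]; exact hg0 β
  have hσball : 0 < (σ (ball b (ε/2))).toReal :=
    ENNReal.toReal_pos (hb (ε/2) (by linarith)).ne' (measure_ne_top σ _)
  rw [integral_indicator_const _ measurableSet_ball, smul_eq_mul] at houter
  have hEQ := hinv f
  rw [hLHS] at hEQ
  rw [← hEQ] at houter
  nlinarith [show σ.real (ball b (ε/2)) = (σ (ball b (ε/2))).toReal from rfl]

/-- `z ∈ [X,Y]` is representable as a depth-`m` truncated IFS sum with digits in `S`. -/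
def RepIn (S : Set ℝ) (δ : ℝ) (m : ℕ) (X Y : ℝ) : Prop :=
  ∀ z ∈ Set.Icc X Y, ∃ s : ℕ → ℝ, (∀ i, s i ∈ S) ∧
    z = ∑ i ∈ Finset.range (m+1), ((1-δ)*δ^i) * s i

lemma exists_last_true {p : ℕ → Prop} (h0 : p 0) (hne : ∃ k, ¬ p k) :
    ∃ k, p k ∧ ¬ p (k+1) := by
  classical
  set N := Nat.find hne with hNdef
  have hN : ¬ p N := Nat.find_spec hne
  have hN0 : N ≠ 0 := fun h => hN (by rw [h]; exact h0)
  have h1 : ¬ ¬ p (N-1) := Nat.find_min hne (by omega)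
  have h2 : N - 1 + 1 = N := by omega
  exact ⟨N-1, not_not.mp h1, by rw [h2]; exact hN⟩

lemma RepIn.pad {S : Set ℝ} {δ : ℝ} {m : ℕ} {X Y : ℝ} (h0S : (0:ℝ) ∈ S)
    (h : RepIn S δ m X Y) {m' : ℕ} (hm : m ≤ m') : RepIn S δ m' X Y := by
  intro z hz
  obtain ⟨s, hsS, hsum⟩ := h z hz
  refine ⟨fun i => if i < m+1 then s i else 0, fun i => ?_, ?_⟩
  · by_cases hi : i < m+1 <;> simp [hi, hsS i, h0S]
  · rw [hsum]
    rw [← Finset.sum_subset (Finset.range_subset_range.mpr (by omega : m+1 ≤ m'+1))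
      (fun i _ hi => by
        simp only [if_neg (show ¬ i < m+1 by simpa using hi), mul_zero])]
    exact Finset.sum_congr rfl (fun i hi => by simp only [if_pos (Finset.mem_range.mp hi)])

lemma RepIn.scale {S : Set ℝ} {δ a₁ : ℝ} {m : ℕ} {X Y : ℝ}
    (hpow : ∀ (k : ℕ) (s : ℝ), s ∈ S → a₁^k * s ∈ S) (ha0 : 0 < a₁)
    (h : RepIn S δ m X Y) (K : ℕ) : RepIn S δ m (a₁^K * X) (a₁^K * Y) := by
  intro z hz
  have hp : (0:ℝ) < a₁^K := pow_pos ha0 K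
  have hz' : z / a₁^K ∈ Set.Icc X Y := by
    constructor
    · rw [le_div_iff₀ hp]; nlinarith [hz.1]
    · rw [div_le_iff₀ hp]; nlinarith [hz.2]
  obtain ⟨s, hsS, hsum⟩ := h _ hz'
  refine ⟨fun i => a₁^K * s i, fun i => hpow K _ (hsS i), ?_⟩
  have h2 : ∑ i ∈ Finset.range (m+1), ((1-δ)*δ^i) * (a₁^K * s i)
      = a₁^K * ∑ i ∈ Finset.range (m+1), ((1-δ)*δ^i) * s i := by
    rw [Finset.mul_sum]; exact Finset.sum_congr rfl (fun i _ => by ring)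
  rw [h2, ← hsum]
  field_simp

lemma rep_combine (S : Set ℝ) (δ a₁ : ℝ) (m n k : ℕ)
    (hpow : ∀ (k : ℕ) (s : ℝ), s ∈ S → a₁^k * s ∈ S)
    (su sv : ℕ → ℝ) (hsu : ∀ i, su i ∈ S) (hsv : ∀ i, sv i ∈ S) :
    ∃ s : ℕ → ℝ, (∀ i, s i ∈ S) ∧
      ∑ i ∈ Finset.range ((m+1)+(n+1)), ((1-δ)*δ^i) * s i
        = (∑ i ∈ Finset.range (m+1), ((1-δ)*δ^i) * su i)
          + δ^(m+1) * a₁^k * (∑ j ∈ Finset.range (n+1), ((1-δ)*δ^j) * sv j) := by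
  refine ⟨fun i => if i < m+1 then su i else a₁^k * sv (i - (m+1)), fun i => ?_, ?_⟩
  · by_cases hi : i < m+1 <;> simp [hi, hsu i, hpow k _ (hsv _)]
  · rw [Finset.sum_range_add]
    congr 1
    · exact Finset.sum_congr rfl (fun i hi => by simp only [if_pos (Finset.mem_range.mp hi)])
    · rw [Finset.mul_sum]
      apply Finset.sum_congr rfl
      intro j hj
      have h1 : ¬ (m+1+j < m+1) := by omega
      have h2 : m+1+j - (m+1) = j := by omega
      simp only [if_neg h1, h2, pow_add]
      ring

lemma boost {S : Set ℝ} {δ a₁ x y : ℝ} {n : ℕ}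
    (hδ0 : 0 < δ) (h0S : (0:ℝ) ∈ S)
    (hpow : ∀ (k : ℕ) (s : ℝ), s ∈ S → a₁^k * s ∈ S) (ha0 : 0 < a₁) (ha1 : a₁ < 1)
    (hx : 0 < x) (hxy : x < y) (hxa : a₁ * y < x)
    (hbase : RepIn S δ n x y)
    (m : ℕ) (X Y : ℝ) (hX : 0 < X) (hXY : X < Y) (hrep : RepIn S δ m X Y) :
    ∃ (m' : ℕ) (X' Y' : ℝ), 0 < X' ∧ X' < Y' ∧ RepIn S δ m' X' Y' ∧
      (Y' - X')/X' = (1 + a₁*y/(x - a₁*y)) * ((Y - X)/X) := by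
  have hy : 0 < y := hx.trans hxy
  have hxsub : 0 < x - a₁*y := by linarith
  set γ := a₁*y/(x - a₁*y) with hγdef
  have hγpos : 0 < γ := div_pos (by positivity) hxsub
  have hγmul : γ * (x - a₁*y) = a₁*y := div_mul_cancel₀ _ (ne_of_gt hxsub)
  set D := δ^(m+1) with hD
  have hDpos : 0 < D := pow_pos hδ0 _
  have hYX : 0 < Y - X := sub_pos.mpr hXY
  obtain ⟨K, hK⟩ : ∃ K : ℕ, a₁^K < D*y/((Y-X)*γ) :=
    exists_pow_lt_of_lt_one (by positivity) ha1
  have haK : (0:ℝ) < a₁^K := pow_pos ha0 K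
  set E := a₁^K*(Y-X)*γ with hE
  have hEpos : 0 < E := by positivity
  have hEcap : E ≤ D*y := by
    have h1 : a₁^K * ((Y-X)*γ) < D*y := by
      rw [← lt_div_iff₀ (by positivity)]; exact hK
    calc E = a₁^K * ((Y-X)*γ) := by rw [hE]; ring
      _ ≤ D*y := h1.le
  refine ⟨m+1+n, a₁^K*X, a₁^K*Y + E, by positivity,
    by nlinarith [mul_lt_mul_of_pos_left hXY haK], ?_, ?_⟩
  · intro z hz
    rcases le_or_gt z (a₁^K*Y) with hzY | hzY
    · exact (RepIn.pad h0S (RepIn.scale hpow ha0 hrep K) (by omega : m ≤ m+1+n)) z ⟨hz.1, hzY⟩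
    · set g := z - a₁^K*Y with hgdef
      have hgpos : 0 < g := sub_pos.mpr hzY
      have hgE : g ≤ E := by
        have := hz.2; simp only [hgdef]; linarith
      have h0 : g ≤ D*a₁^0*y := by simpa using hgE.trans hEcap
      have hev : ∃ k, ¬ g ≤ D*a₁^k*y := by
        obtain ⟨k, hk⟩ := exists_pow_lt_of_lt_one (show (0:ℝ) < g/(D*y) by positivity) ha1
        have hk' : a₁^k * (D*y) < g := (lt_div_iff₀ (show (0:ℝ) < D*y by positivity)).mp hk
        refine ⟨k, by push_neg; calc D*a₁^k*y = a₁^k*(D*y) := by ring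
          _ < g := hk'⟩
      obtain ⟨k, hk1, hk2⟩ := exists_last_true h0 hev
      push_neg at hk2
      have hak : (0:ℝ) < a₁^k := pow_pos ha0 k
      have hDk : (0:ℝ) < D*a₁^k := by positivity
      have hB : D*a₁^k*x ≤ g + a₁^K*(Y - X) := by
        have hstep1 : D*a₁^k*x*(a₁*y) < g*x := by
          have h3 := mul_lt_mul_of_pos_right hk2 hx
          calc D*a₁^k*x*(a₁*y) = D*a₁^(k+1)*y*x := by rw [pow_succ]; ring
            _ < g*x := h3
        have hstep2 : g*x ≤ (g + a₁^K*(Y-X))*(a₁*y) := by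
          have h4 : g*(x-a₁*y) ≤ E*(x-a₁*y) := mul_le_mul_of_nonneg_right hgE hxsub.le
          have h5 : E*(x-a₁*y) = a₁^K*(Y-X)*(a₁*y) := by
            calc E*(x-a₁*y) = a₁^K*(Y-X)*(γ*(x-a₁*y)) := by rw [hE]; ring
              _ = a₁^K*(Y-X)*(a₁*y) := by rw [hγmul]
          nlinarith
        have h6 : D*a₁^k*x*(a₁*y) < (g + a₁^K*(Y-X))*(a₁*y) := lt_of_lt_of_le hstep1 hstep2
        have h7 : (0:ℝ) < a₁*y := by positivity
        exact ((mul_lt_mul_iff_of_pos_right h7).mp h6).le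
      set v := max x (g/(D*a₁^k)) with hvdef
      have hvx : x ≤ v := le_max_left _ _
      have hvy : v ≤ y := by
        apply max_le hxy.le
        rw [div_le_iff₀ hDk]
        calc g ≤ D*a₁^k*y := hk1
          _ = y*(D*a₁^k) := by ring
      set u := z - D*a₁^k*v with hudef
      have hum : u ∈ Set.Icc (a₁^K*X) (a₁^K*Y) := by
        rcases le_total x (g/(D*a₁^k)) with hcase | hcase
        · have hveq : v = g/(D*a₁^k) := max_eq_right hcase
          have hDv : D*a₁^k*v = g := by rw [hveq]; field_simp
          have hu' : u = a₁^K*Y := by rw [hudef, hDv, hgdef]; ring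
          rw [hu']
          exact ⟨mul_le_mul_of_nonneg_left hXY.le haK.le, le_refl _⟩
        · have hveq : v = x := max_eq_left hcase
          have hgx : g ≤ D*a₁^k*x := by
            have h8 := (div_le_iff₀ hDk).mp hcase
            calc g ≤ x*(D*a₁^k) := h8
              _ = D*a₁^k*x := by ring
          constructor
          · rw [hudef, hveq]
            have : z = g + a₁^K*Y := by rw [hgdef]; ring
            linarith [hB]
          · rw [hudef, hveq]
            have : z = g + a₁^K*Y := by rw [hgdef]; ring
            linarith
      obtain ⟨su, hsu, hu_eq⟩ := (RepIn.scale hpow ha0 hrep K) u hum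
      obtain ⟨sv, hsv, hv_eq⟩ := hbase v ⟨hvx, hvy⟩
      obtain ⟨s, hsS, hsum⟩ := rep_combine S δ a₁ m n k hpow su sv hsu hsv
      refine ⟨s, hsS, ?_⟩
      have hidx : m+1+n+1 = (m+1)+(n+1) := by omega
      rw [hidx, hsum, ← hu_eq, ← hv_eq]
      rw [hudef, hD]
      ring
  · rw [hE, show a₁^K*Y + a₁^K*(Y-X)*γ - a₁^K*X = a₁^K*((1+γ)*(Y-X)) from by ring,
      mul_div_mul_left _ _ (ne_of_gt haK), mul_div_assoc]

end Aux
theorem supp_mu_contains_interval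
    (a₁ a₂ : ℝ) (h₁ : 0 < a₁ ∧ a₁ ≤ 1/3) (h₂ : 0 < a₂ ∧ a₂ ≤ 1/3)
    (a : ℝ) (ha : a = min a₁ a₂)
    (σ μ : Measure ℝ) [IsProbabilityMeasure σ] [IsProbabilityMeasure μ]
    (S : Set ℝ) (hSdef : S = msupport σ)
    (hS01 : S ⊆ Set.Icc (0:ℝ) 1) (h0S : (0:ℝ) ∈ S) (h1S : (1:ℝ) ∈ S)
    -- S is the attractor of the first-generation IFS with fixed points 0 and 1
    (hattr : S = (fun x => a₁ * x) '' S ∪ (fun x => a₂ * x + (1 - a₂)) '' S)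
    -- the first-generation IFS is disconnected
    (hdisc : (fun x => a₁ * x) '' Set.Icc (0:ℝ) 1 ∩
        (fun x => a₂ * x + (1 - a₂)) '' Set.Icc (0:ℝ) 1 = ∅)
    (δ : ℝ) (hδ0 : 0 < δ) (hδ1 : δ < 1)
    -- μ is the invariant measure of the homogeneous (δ,σ)-IFS
    (hinv : ∀ f : BoundedContinuousFunction ℝ ℝ,
      ∫ x, f x ∂μ = ∫ β, ∫ s, f (δ * s + (1 - δ) * β) ∂μ ∂σ)
    -- Cabrelli–Hare–Molter criterion, assumed: a sum of n+1 rescaled copies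
    -- of S contains an interval whenever n·a²/(1-a)³ + a/(1-a) ≥ 1
    (hCHM : ∀ n : ℕ,
      1 ≤ (n : ℝ) * a ^ 2 / (1 - a) ^ 3 + a / (1 - a) →
      ∀ c : Fin (n + 1) → ℝ, (∀ i, 0 < c i) →
        ∃ x y : ℝ, x < y ∧ Set.Icc x y ⊆
          {z : ℝ | ∃ s : Fin (n + 1) → ℝ, (∀ i, s i ∈ S) ∧
            z = ∑ i, c i * s i}) :
    (∃ x y : ℝ, x < y ∧ Set.Icc x y ⊆ msupport μ) ∧
    ∃ n : ℕ, Set.Icc (0 : ℝ) ((1 - δ) * δ ^ n) ⊆ msupport μ := by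
  obtain ⟨ha₁0, ha₁3⟩ := h₁
  obtain ⟨ha₂0, ha₂3⟩ := h₂
  have ha₁1 : a₁ < 1 := lt_of_le_of_lt ha₁3 (by norm_num)
  -- S is closed under multiplication by a₁
  have hS_a₁ : ∀ s ∈ S, a₁ * s ∈ S := by
    intro s hs
    rw [hattr]
    exact Or.inl ⟨s, hs, rfl⟩
  have hpow : ∀ (k : ℕ) (s : ℝ), s ∈ S → a₁^k * s ∈ S := by
    intro k
    induction k with
    | zero => intro s hs; simpa using hs
    | succ k ih =>
        intro s hs
        have h2 := ih (a₁ * s) (hS_a₁ s hs)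
        have h3 : a₁^k * (a₁ * s) = a₁^(k+1) * s := by rw [pow_succ]; ring
        rwa [h3] at h2
  -- support step map
  have hstep : ∀ {b w : ℝ}, b ∈ S → w ∈ msupport μ → δ*w + (1-δ)*b ∈ msupport μ := by
    intro b w hb hw
    exact support_step σ μ δ hδ0 hδ1 hinv (hSdef ▸ hb) hw
  -- 0 belongs to the support of μ
  obtain ⟨w₀, hw₀⟩ := msupport_nonempty μ
  have hK0 : (0:ℝ) ∈ msupport μ := by
    have hmem : ∀ m : ℕ, δ^m * w₀ ∈ msupport μ := by
      intro m
      induction m with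
      | zero => simpa using hw₀
      | succ m ih =>
          have h2 := hstep h0S ih
          have h3 : δ*(δ^m*w₀) + (1-δ)*0 = δ^(m+1)*w₀ := by rw [pow_succ]; ring
          rwa [h3] at h2
    have htend : Filter.Tendsto (fun m : ℕ => δ^m * w₀) Filter.atTop (nhds 0) := by
      have h4 := (tendsto_pow_atTop_nhds_zero_of_lt_one hδ0.le hδ1).mul_const w₀
      simpa using h4
    exact (msupport_closed μ).mem_of_tendsto htend (Filter.Eventually.of_forall hmem)
  -- every truncated IFS sum with digits in S lies in the support of μ
  have hHK : ∀ (m : ℕ) (s : ℕ → ℝ), (∀ i, s i ∈ S) →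
      (∑ i ∈ Finset.range (m+1), ((1-δ)*δ^i) * s i) ∈ msupport μ := by
    intro m
    induction m with
    | zero =>
        intro s hs
        have h2 := hstep (hs 0) hK0
        have h3 : δ*0 + (1-δ)*s 0 = ∑ i ∈ Finset.range 1, ((1-δ)*δ^i) * s i := by
          rw [Finset.sum_range_one]; ring
        rwa [h3] at h2
    | succ m ih =>
        intro s hs
        have h1 := ih (fun i => s (i+1)) (fun i => hs _)
        have h2 := hstep (hs 0) h1
        have h3 : δ*(∑ i ∈ Finset.range (m+1), ((1-δ)*δ^i) * s (i+1)) + (1-δ)*s 0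
            = ∑ i ∈ Finset.range (m+1+1), ((1-δ)*δ^i) * s i := by
          conv_rhs => rw [Finset.sum_range_succ']
          rw [Finset.mul_sum]
          congr 1
          · exact Finset.sum_congr rfl (fun i _ => by rw [pow_succ]; ring)
          · ring
        rwa [h3] at h2
  -- choose n satisfying the CHM criterion
  have ha0 : 0 < a := by rw [ha]; exact lt_min ha₁0 ha₂0
  have ha3 : a ≤ 1/3 := by rw [ha]; exact (min_le_left _ _).trans ha₁3
  have h1a : 0 < 1 - a := by linarith
  obtain ⟨n, hn⟩ := exists_nat_ge ((1-a)^3/a^2)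
  have hcrit : 1 ≤ (n : ℝ) * a ^ 2 / (1 - a) ^ 3 + a / (1 - a) := by
    have h1 : (1-a)^3 ≤ (n:ℝ)*a^2 := by
      have h2 := (div_le_iff₀ (show (0:ℝ) < a^2 by positivity)).mp hn
      linarith
    have h2 : (1:ℝ) ≤ (n:ℝ)*a^2/(1-a)^3 := (one_le_div (by positivity)).mpr h1
    have h3 : (0:ℝ) ≤ a/(1-a) := by positivity
    linarith
  have hδ1' : (0:ℝ) < 1 - δ := by linarith
  obtain ⟨x, y, hxy, hI⟩ := hCHM n hcrit (fun i => (1-δ)*δ^(i:ℕ))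
    (fun i => by positivity)
  -- convert the CHM interval to a RepIn statement
  have hbase : RepIn S δ n x y := by
    intro z hz
    obtain ⟨s, hsS, hz_eq⟩ := hI hz
    refine ⟨fun j => if h : j < n+1 then s ⟨j, h⟩ else 0, fun j => ?_, ?_⟩
    · by_cases h : j < n+1 <;> simp [h, hsS, h0S]
    · have hconv : ∑ j ∈ Finset.range (n+1), ((1-δ)*δ^j) * (if h : j < n+1 then s ⟨j, h⟩ else 0)
          = ∑ i : Fin (n+1), ((1-δ)*δ^(i:ℕ)) * s i := by
        rw [Finset.sum_range]
        apply Finset.sum_congr rfl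
        intro i _
        have hlt : (i:ℕ) < n+1 := i.isLt
        rw [dif_pos hlt, Fin.eta]
      rw [hconv]
      simpa using hz_eq
  have hx0 : 0 ≤ x := by
    obtain ⟨s, hsS, hxeq⟩ := hbase x (Set.left_mem_Icc.mpr hxy.le)
    rw [hxeq]
    apply Finset.sum_nonneg
    intro i _
    have hsi : (0:ℝ) ≤ s i := (hS01 (hsS i)).1
    have hco : (0:ℝ) ≤ (1-δ)*δ^i := by positivity
    exact mul_nonneg hco hsi
  constructor
  · refine ⟨x, y, hxy, fun z hz => ?_⟩
    obtain ⟨s, hsS, hzeq⟩ := hbase z hz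
    rw [hzeq]
    exact hHK n s hsS
  -- Part 2: an interval attached to 0
  have hFIN : ∀ (m : ℕ) (X Y : ℝ), 0 < X → X ≤ a₁*Y → RepIn S δ m X Y →
      ∀ z ∈ Set.Ioc (0:ℝ) Y, z ∈ msupport μ := by
    intro m X Y hX hXa hrep z hz
    have haY : 0 < a₁*Y := lt_of_lt_of_le hX hXa
    have hY : 0 < Y := by nlinarith
    have h0 : z ≤ a₁^0*Y := by simpa using hz.2
    have hev : ∃ k : ℕ, ¬ z ≤ a₁^k*Y := by
      obtain ⟨k, hk⟩ := exists_pow_lt_of_lt_one (div_pos hz.1 hY) ha₁1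
      exact ⟨k, not_le.mpr ((lt_div_iff₀ hY).mp hk)⟩
    obtain ⟨k, hk1, hk2⟩ := exists_last_true h0 hev
    push_neg at hk2
    have hak : (0:ℝ) < a₁^k := pow_pos ha₁0 k
    have hlow : a₁^k*X ≤ z := by
      have h5 : a₁^k*X ≤ a₁^(k+1)*Y := by
        calc a₁^k*X ≤ a₁^k*(a₁*Y) := mul_le_mul_of_nonneg_left hXa hak.le
          _ = a₁^(k+1)*Y := by rw [pow_succ]; ring
      linarith [hk2]
    obtain ⟨s, hsS, hzeq⟩ := (RepIn.scale hpow ha₁0 hrep k) z ⟨hlow, hk1⟩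
    rw [hzeq]
    exact hHK m s hsS
  have hcore : ∃ Ystar : ℝ, 0 < Ystar ∧ ∀ z ∈ Set.Ioc (0:ℝ) Ystar, z ∈ msupport μ := by
    have hy : 0 < y := lt_of_le_of_lt hx0 hxy
    rcases eq_or_lt_of_le hx0 with hx0' | hxpos
    · refine ⟨y, hy, fun z hz => ?_⟩
      obtain ⟨s, hsS, hzeq⟩ := hbase z ⟨by rw [← hx0']; exact hz.1.le, hz.2⟩
      rw [hzeq]; exact hHK n s hsS
    · rcases le_or_gt x (a₁*y) with hc | hc
      · exact ⟨y, hy, fun z hz => hFIN n x y hxpos hc hbase z hz⟩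
      · set γ := a₁*y/(x - a₁*y) with hγdef
        have hxsub : 0 < x - a₁*y := by linarith
        have hγpos : 0 < γ := div_pos (by positivity) hxsub
        have hloop : ∀ t : ℕ, ∃ (m : ℕ) (X Y : ℝ), 0 < X ∧ X < Y ∧ RepIn S δ m X Y ∧
            ((y-x)/x)*(1+γ)^t ≤ (Y-X)/X := by
          intro t
          induction t with
          | zero =>
              refine ⟨n, x, y, hxpos, hxy, hbase, ?_⟩
              simp
          | succ t ih =>
              obtain ⟨m, X, Y, hX, hXY, hrep, hratio⟩ := ih
              obtain ⟨m', X', Y', hX', hXY', hrep', hr'⟩ :=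
                boost hδ0 h0S hpow ha₁0 ha₁1 hxpos hxy hc hbase m X Y hX hXY hrep
              rw [← hγdef] at hr'
              refine ⟨m', X', Y', hX', hXY', hrep', ?_⟩
              rw [hr']
              calc ((y-x)/x)*(1+γ)^(t+1) = (1+γ)*(((y-x)/x)*(1+γ)^t) := by ring
                _ ≤ (1+γ)*((Y-X)/X) :=
                    mul_le_mul_of_nonneg_left hratio (by positivity)
        have hR0 : 0 < (y-x)/x := div_pos (sub_pos.mpr hxy) hxpos
        obtain ⟨t, ht⟩ := pow_unbounded_of_one_lt (((1-a₁)/a₁)/((y-x)/x))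
          (show (1:ℝ) < 1+γ by linarith)
        obtain ⟨m, X, Y, hX, hXY, hrep, hratio⟩ := hloop t
        have hfin : X ≤ a₁*Y := by
          have h1 : (1-a₁)/a₁ ≤ (Y-X)/X := by
            have h2 : (1-a₁)/a₁ < ((y-x)/x)*(1+γ)^t := by
              have h6 := (div_lt_iff₀ hR0).mp ht
              nlinarith
            linarith [hratio]
          have h3 := (div_le_div_iff₀ ha₁0 hX).mp h1
          nlinarith
        exact ⟨Y, by linarith, fun z hz => hFIN m X Y hX hfin hrep z hz⟩
  obtain ⟨Ystar, hYpos, hYsub⟩ := hcore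
  obtain ⟨n₂, hn₂⟩ := exists_pow_lt_of_lt_one hYpos hδ1
  refine ⟨n₂, fun z hz => ?_⟩
  rcases eq_or_lt_of_le hz.1 with h0z | h0z
  · rw [← h0z]; exact hK0
  · apply hYsub
    refine ⟨h0z, le_trans hz.2 ?_⟩
    have hp : (0:ℝ) < δ^n₂ := pow_pos hδ0 n₂
    nlinarith
end
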